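/- If a 3-connected graph contains a mixed bicycle, then it is K_{2,3}-based, i.e., it contains a subgraph that is a bisubdivision of the complete bipartite graph K_{2,3}. -/

import Mathlib

open SimpleGraph

variable {V : Type*}

/-- A matching covered graph: a connected graph with at least two vertices in which
every edge belongs to some perfect matching. -/
def MatchingCovered (G : SimpleGraph V) : Prop :=
  G.Connected ∧ Nontrivial V ∧
    ∀ e ∈ G.edgeSet, ∃ M : G.Subgraph, M.IsPerfectMatching ∧ e ∈ M.edgeSet

/-- A cycle `C` is conformal if `G - V(C)` has a perfect matching. -/
def ConformalCycle (G : SimpleGraph V) {u : V} (C : G.Walk u u) : Prop :=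
  ∃ M : G.Subgraph, M.IsMatching ∧ M.verts = {w | w ∉ C.support}

/-- A matching covered graph is cycle-extendable if each of its even cycles is conformal. -/
def CycleExtendable (G : SimpleGraph V) : Prop :=
  ∀ ⦃u : V⦄ (C : G.Walk u u), C.IsCycle → Even C.length → ConformalCycle G C
/-- `G` contains a subgraph which is a subdivision of `K` in which the path replacing
each edge has length satisfying `okLen`: there are internally disjoint paths in `G`
joining the images of the branch vertices. -/
def HasSubdiv {W : Type*} (G : SimpleGraph V) (K : SimpleGraph W) (okLen : ℕ → Prop) : Prop :=
  ∃ (f : W ↪ V) (p : ∀ a b : W, K.Adj a b → G.Walk (f a) (f b)),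
    (∀ a b hab, (p a b hab).IsPath) ∧
    (∀ a b hab, okLen (p a b hab).length) ∧
    (∀ a b hab (c : W), f c ∈ (p a b hab).support → c = a ∨ c = b) ∧
    (∀ a b hab a' b' hab', s(a, b) ≠ s(a', b') →
      ∀ w, w ∈ (p a b hab).support → w ∈ (p a' b' hab').support →
        (w = f a ∨ w = f b) ∧ (w = f a' ∨ w = f b'))

/-- `G` is `K`-based: some subgraph of `G` is a bisubdivision of `K` (each edge of `K`
is replaced by an odd path, i.e. subdivided by an even number of vertices). -/
def IsBasedOn {W : Type*} (G : SimpleGraph V) (K : SimpleGraph W) : Prop :=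
  HasSubdiv G K Odd

/-- `G` contains a subdivision of `K`. -/
def ContainsSubdivision {W : Type*} (G : SimpleGraph V) (K : SimpleGraph W) : Prop :=
  HasSubdiv G K fun _ => True

/-- Planarity, via Kuratowski's characterization: no subdivision of `K₅` nor of `K₃,₃`. -/
def IsPlanar (G : SimpleGraph V) : Prop :=
  ¬ ContainsSubdivision G (⊤ : SimpleGraph (Fin 5)) ∧
  ¬ ContainsSubdivision G (completeBipartiteGraph (Fin 3) (Fin 3))

/-- `G` is `K₂,₃`-based: it contains a subgraph that is a bisubdivision of `K₂,₃`. -/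
def K23Based (G : SimpleGraph V) : Prop :=
  IsBasedOn G (completeBipartiteGraph (Fin 2) (Fin 3))
/-- A mixed bicycle: a pair of vertex-disjoint cycles, one odd and one even
(of length at least four). -/
def HasMixedBicycle (G : SimpleGraph V) : Prop :=
  ∃ (u v : V) (Qo : G.Walk u u) (Qe : G.Walk v v),
    Qo.IsCycle ∧ Qe.IsCycle ∧ Odd Qo.length ∧ Even Qe.length ∧ 4 ≤ Qe.length ∧
    ∀ w ∈ Qo.support, w ∉ Qe.support

/-- `G` is 3-connected: it has at least four vertices and deleting any set of at most
two vertices leaves a connected graph. -/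
def ThreeConnected (G : SimpleGraph V) [Fintype V] : Prop :=
  4 ≤ Fintype.card V ∧ ∀ S : Set V, S.ncard ≤ 2 → (G.induce Sᶜ).Connected



section AuxiliaryMachinery
open Walk
variable {G : SimpleGraph V}

variable {V : Type*} {G : SimpleGraph V}

lemma isPath_append_of [DecidableEq V] {u v w : V} {p : G.Walk u v} {q : G.Walk v w}
    (hp : p.IsPath) (hq : q.IsPath)
    (h : ∀ z, z ∈ p.support → z ∈ q.support → z = v) : (p.append q).IsPath := by
  rw [Walk.isPath_def, Walk.support_append]
  have hq' : (v :: q.support.tail).Nodup := by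
    rw [← q.support_eq_cons]; exact hq.support_nodup
  refine List.Nodup.append hp.support_nodup (List.nodup_cons.mp hq').2 ?_
  intro z hz hz'
  have hzv : z = v := h z hz (List.mem_of_mem_tail hz')
  subst hzv
  exact (List.nodup_cons.mp hq').1 hz'

lemma exists_prefix_firstHit (S : Set V) {a b : V} (w : G.Walk a b) (hb : b ∈ S) :
    ∃ (c : V) (q : G.Walk a c), c ∈ S ∧ (∀ v ∈ q.support, v ∈ S → v = c) ∧
      (∀ v ∈ q.support, v ∈ w.support) ∧ (∀ e ∈ q.edges, e ∈ w.edges) := by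
  induction w with
  | nil => exact ⟨_, Walk.nil, hb, by simp +contextual, by simp, by simp⟩
  | @cons a d b h w' ih =>
    by_cases ha : a ∈ S
    · exact ⟨a, Walk.nil, ha, by simp +contextual, by simp, by simp⟩
    · obtain ⟨c, q', hc, hfirst, hsupp, hedges⟩ := ih hb
      refine ⟨c, Walk.cons h q', hc, ?_, ?_, ?_⟩
      · intro v hv hvS
        rw [Walk.support_cons] at hv
        rcases List.mem_cons.mp hv with rfl | hv'
        · exact absurd hvS ha
        · exact hfirst v hv' hvS
      · intro v hv
        rw [Walk.support_cons] at hv ⊢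
        rcases List.mem_cons.mp hv with rfl | hv'
        · exact List.mem_cons_self
        · exact List.mem_cons_of_mem _ (hsupp v hv')
      · intro e he
        rw [Walk.edges_cons] at he ⊢
        rcases List.mem_cons.mp he with rfl | he'
        · exact List.mem_cons_self
        · exact List.mem_cons_of_mem _ (hedges e he')

/-- Trim a walk from `A` to `B` into a path meeting `A` only at its start and `B` only
at its end. -/
lemma exists_trimmed_path (A B : Set V) {a b : V} (w : G.Walk a b) (ha : a ∈ A) (hb : b ∈ B) :
    ∃ (a' b' : V) (p : G.Walk a' b'), a' ∈ A ∧ b' ∈ B ∧ p.IsPath ∧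
      (∀ v ∈ p.support, v ∈ w.support) ∧ (∀ e ∈ p.edges, e ∈ w.edges) ∧
      (∀ v ∈ p.support, v ∈ A → v = a') ∧ (∀ v ∈ p.support, v ∈ B → v = b') := by
  classical
  obtain ⟨b', q1, hb', hfirstB, hsupp1, hedges1⟩ := exists_prefix_firstHit B w hb
  obtain ⟨a', q2, ha', hfirstA, hsupp2, hedges2⟩ := exists_prefix_firstHit A q1.reverse
    (by simpa using ha)
  refine ⟨a', b', q2.reverse.bypass, ha', hb', Walk.bypass_isPath _, ?_, ?_, ?_, ?_⟩
  · intro v hv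
    have := Walk.support_bypass_subset _ hv
    rw [Walk.support_reverse] at this
    have h2 := hsupp2 v (List.mem_reverse.mp this)
    rw [Walk.support_reverse, List.mem_reverse] at h2
    exact hsupp1 v h2
  · intro e he
    have := Walk.edges_bypass_subset _ he
    rw [Walk.edges_reverse] at this
    rw [List.mem_reverse] at this
    have h2 := hedges2 e this
    rw [Walk.edges_reverse, List.mem_reverse] at h2
    exact hedges1 e h2
  · intro v hv hvA
    have := Walk.support_bypass_subset _ hv
    rw [Walk.support_reverse, List.mem_reverse] at this
    exact hfirstA v this hvA
  · intro v hv hvB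
    have := Walk.support_bypass_subset _ hv
    rw [Walk.support_reverse, List.mem_reverse] at this
    have hvq1 : v ∈ q1.support := by simpa using hsupp2 v this
    exact hfirstB v hvq1 hvB

variable {V : Type*} {G : SimpleGraph V}

/-- `S` separates `A` from `B` in `G`: every walk from `A` to `B` meets `S`. -/
def MSep (G : SimpleGraph V) (A B S : Set V) : Prop :=
  ∀ ⦃a b : V⦄, a ∈ A → b ∈ B → ∀ w : G.Walk a b, ∃ v, v ∈ w.support ∧ v ∈ S

/-- A system of `k` pairwise vertex-disjoint paths from `A` to `B`. -/
structure Fan (G : SimpleGraph V) (A B : Set V) (k : ℕ) where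
  a : Fin k → V
  b : Fin k → V
  P : ∀ i, G.Walk (a i) (b i)
  ha : ∀ i, a i ∈ A
  hb : ∀ i, b i ∈ B
  hpath : ∀ i, (P i).IsPath
  hdisj : ∀ i j, i ≠ j → ∀ v, v ∈ (P i).support → v ∈ (P j).support → False

lemma walk_end_eq_of_edgeless (hE : G.edgeSet = ∅) {a b : V} (w : G.Walk a b) : a = b := by
  cases w with
  | nil => rfl
  | cons h _ => exact absurd (G.mem_edgeSet.mpr h) (by simp [hE])

lemma exists_inj_of_ncard {S : Set V} {k : ℕ} (hfin : S.Finite) (h : k ≤ S.ncard) :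
    ∃ g : Fin k → V, Function.Injective g ∧ ∀ i, g i ∈ S := by
  classical
  obtain ⟨t, hts, htcard⟩ := Set.exists_subset_card_eq h
  have htfin : t.Finite := hfin.subset hts
  haveI := htfin.fintype
  have : Fintype.card t = k := by
    rw [← htcard, Set.ncard_eq_toFinset_card']
    simp [Set.toFinset_card]
  obtain ⟨e⟩ : Nonempty (Fin k ≃ t) := ⟨(Fintype.equivFinOfCardEq this).symm⟩
  exact ⟨fun i => (e i : V), fun i j hij => e.injective (Subtype.ext hij),
    fun i => hts (e i).2⟩

lemma surj_of_inj_ncard {S : Set V} {k : ℕ} (hfin : S.Finite) (s : Fin k → V)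
    (hinj : Function.Injective s) (hmem : ∀ i, s i ∈ S) (hcard : S.ncard = k) :
    ∀ w ∈ S, ∃ i, s i = w := by
  classical
  have hsub : Set.range s ⊆ S := by rintro _ ⟨i, rfl⟩; exact hmem i
  have hrange : (Set.range s).ncard = k := by
    rw [← Set.image_univ, Set.ncard_image_of_injective _ hinj]
    simp [Set.ncard_univ]
  have : Set.range s = S := Set.eq_of_subset_of_ncard_le hsub (by omega) hfin
  intro w hw
  rw [← this] at hw
  exact hw

/-- The contraction of the edge `xy`, keeping `x` and isolating `y`. -/
def conG (G : SimpleGraph V) (x y : V) : SimpleGraph V where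
  Adj u v := (u ≠ y ∧ v ≠ y ∧ u ≠ v) ∧
    (G.Adj u v ∨ (u = x ∧ G.Adj y v) ∨ (v = x ∧ G.Adj u y))
  symm := by
    constructor
    rintro u v ⟨⟨h1, h2, h3⟩, h⟩
    refine ⟨⟨h2, h1, h3.symm⟩, ?_⟩
    rcases h with h | ⟨rfl, h⟩ | ⟨rfl, h⟩
    · exact Or.inl h.symm
    · exact Or.inr (Or.inr ⟨rfl, h.symm⟩)
    · exact Or.inr (Or.inl ⟨rfl, h.symm⟩)
  loopless := ⟨fun v h => h.1.2.2 rfl⟩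

lemma conG_adj {x y u v : V} : (conG G x y).Adj u v ↔ ((u ≠ y ∧ v ≠ y ∧ u ≠ v) ∧
    (G.Adj u v ∨ (u = x ∧ G.Adj y v) ∨ (v = x ∧ G.Adj u y))) := Iff.rfl

/-- Contraction projection. -/
def conP [DecidableEq V] (x y : V) : V → V := fun v => if v = y then x else v

lemma conP_ne_y [DecidableEq V] {x y : V} (hne : x ≠ y) (v : V) : conP x y v ≠ y := by
  unfold conP; split <;> simp_all

lemma conP_eq_self [DecidableEq V] {x y v : V} (h : v ≠ y) : conP x y v = v := if_neg h

lemma conP_y [DecidableEq V] {x y : V} : conP x y y = x := if_pos rfl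

lemma conG_proj_walk [DecidableEq V] {x y : V} (hxy : G.Adj x y) {a b : V} (w : G.Walk a b) :
    ∃ w' : (conG G x y).Walk (conP x y a) (conP x y b),
      ∀ v ∈ w'.support, ∃ u ∈ w.support, conP x y u = v := by
  have hne : x ≠ y := hxy.ne
  induction w with
  | nil => exact ⟨Walk.nil, by simp +contextual⟩
  | @cons a d b h w' ih =>
    obtain ⟨w'', hw''⟩ := ih
    by_cases had : conP x y a = conP x y d
    · refine ⟨w''.copy had.symm rfl, ?_⟩
      intro v hv
      rw [Walk.support_copy] at hv
      obtain ⟨u, hu, hu'⟩ := hw'' v hv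
      exact ⟨u, by simp [hu], hu'⟩
    · have hadj : (conG G x y).Adj (conP x y a) (conP x y d) := by
        refine conG_adj.mpr ⟨⟨conP_ne_y hne a, conP_ne_y hne d, had⟩, ?_⟩
        by_cases hay : a = y
        · have hdy : d ≠ y := fun hd => had (by rw [hay, hd])
          rw [hay, conP_y, conP_eq_self hdy]
          exact Or.inr (Or.inl ⟨rfl, hay ▸ h⟩)
        · by_cases hdy : d = y
          · rw [hdy, conP_y, conP_eq_self hay]
            exact Or.inr (Or.inr ⟨rfl, hdy ▸ h⟩)
          · rw [conP_eq_self hay, conP_eq_self hdy]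
            exact Or.inl h
      refine ⟨Walk.cons hadj w'', ?_⟩
      intro v hv
      rw [Walk.support_cons] at hv
      rcases List.mem_cons.mp hv with rfl | hv'
      · exact ⟨a, by simp, rfl⟩
      · obtain ⟨u, hu, hu'⟩ := hw'' v hv'
        exact ⟨u, by simp [hu], hu'⟩

lemma conG_no_y {x y : V} {u v : V} (p : (conG G x y).Walk u v) (hu : u ≠ y) :
    ∀ w ∈ p.support, w ≠ y := by
  induction p with
  | nil => simpa using hu
  | @cons a d b h p' ih =>
    intro w hw
    rw [Walk.support_cons] at hw
    rcases List.mem_cons.mp hw with rfl | hw'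
    · exact hu
    · exact ih (conG_adj.mp h).1.2.1 w hw'

lemma conG_lift {x y : V} (hxy : G.Adj x y) {u v : V} (p : (conG G x y).Walk u v) :
    ∃ q : G.Walk u v, ∀ w ∈ q.support, w ∈ p.support ∨ (w = y ∧ x ∈ p.support) := by
  induction p with
  | nil => exact ⟨Walk.nil, by simp +contextual⟩
  | @cons a d b h p' ih =>
    obtain ⟨q', hq'⟩ := ih
    rcases (conG_adj.mp h).2 with hG | ⟨rfl, hG⟩ | ⟨rfl, hG⟩
    · refine ⟨Walk.cons hG q', ?_⟩
      intro w hw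
      rw [Walk.support_cons] at hw ⊢
      rcases List.mem_cons.mp hw with rfl | hw'
      · exact Or.inl (List.mem_cons_self)
      · rcases hq' w hw' with h1 | h1
        · exact Or.inl (List.mem_cons_of_mem _ h1)
        · exact Or.inr ⟨h1.1, by simp [Walk.support_cons, h1.2]⟩
    · refine ⟨Walk.cons hxy (Walk.cons hG q'), ?_⟩
      intro w hw
      rw [Walk.support_cons, Walk.support_cons] at hw
      rcases List.mem_cons.mp hw with rfl | hw'
      · exact Or.inl (by simp)
      · rcases List.mem_cons.mp hw' with rfl | hw''
        · exact Or.inr ⟨rfl, by simp⟩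
        · rcases hq' w hw'' with h1 | h1
          · exact Or.inl (by simp [h1, Walk.support_cons])
          · exact Or.inr ⟨h1.1, by simp [Walk.support_cons, h1.2]⟩
    · refine ⟨Walk.cons hG (Walk.cons hxy.symm q'), ?_⟩
      intro w hw
      rw [Walk.support_cons, Walk.support_cons] at hw
      rcases List.mem_cons.mp hw with rfl | hw'
      · exact Or.inl (by simp)
      · rcases List.mem_cons.mp hw' with rfl | hw''
        · exact Or.inr ⟨rfl, by simp [Walk.support_cons]⟩
        · rcases hq' w hw'' with h1 | h1
          · exact Or.inl (by simp [h1, Walk.support_cons])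
          · exact Or.inr ⟨h1.1, by simp [Walk.support_cons, h1.2]⟩

variable {V : Type*} {G : SimpleGraph V}

lemma exists_prefix_firstHit' (S : Set V) {a b : V} (w : G.Walk a b)
    (hhit : ∃ v ∈ w.support, v ∈ S) :
    ∃ (c : V) (q : G.Walk a c), c ∈ S ∧ (∀ v ∈ q.support, v ∈ S → v = c) ∧
      (∀ v ∈ q.support, v ∈ w.support) ∧ (∀ e ∈ q.edges, e ∈ w.edges) := by
  induction w with
  | nil =>
    obtain ⟨v, hv, hvS⟩ := hhit
    rw [Walk.support_nil, List.mem_singleton] at hv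
    subst hv
    exact ⟨_, Walk.nil, hvS, by simp +contextual, by simp, by simp⟩
  | @cons a d b h w' ih =>
    by_cases ha : a ∈ S
    · exact ⟨a, Walk.nil, ha, by simp +contextual, by simp, by simp⟩
    · have hhit' : ∃ v ∈ w'.support, v ∈ S := by
        obtain ⟨v, hv, hvS⟩ := hhit
        rw [Walk.support_cons] at hv
        rcases List.mem_cons.mp hv with rfl | hv'
        · exact absurd hvS ha
        · exact ⟨v, hv', hvS⟩
      obtain ⟨c, q', hc, hfirst, hsupp, hedges⟩ := ih hhit'
      refine ⟨c, Walk.cons h q', hc, ?_, ?_, ?_⟩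
      · intro v hv hvS
        rw [Walk.support_cons] at hv
        rcases List.mem_cons.mp hv with rfl | hv'
        · exact absurd hvS ha
        · exact hfirst v hv' hvS
      · intro v hv
        rw [Walk.support_cons] at hv ⊢
        rcases List.mem_cons.mp hv with rfl | hv'
        · exact List.mem_cons_self
        · exact List.mem_cons_of_mem _ (hsupp v hv')
      · intro e he
        rw [Walk.edges_cons] at he ⊢
        rcases List.mem_cons.mp he with rfl | he'
        · exact List.mem_cons_self
        · exact List.mem_cons_of_mem _ (hedges e he')

lemma end_mem_tail_support {u v : V} (q : G.Walk u v) (h : u ≠ v) : v ∈ q.support.tail := by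
  have hv : v ∈ q.support := q.end_mem_support
  rw [q.support_eq_cons] at hv
  rcases List.mem_cons.mp hv with rfl | hv'
  · exact absurd rfl h
  · exact hv'

lemma end_not_mem_takeUntil [DecidableEq V] {a b v : V} {p : G.Walk a b} (hp : p.IsPath)
    (h : v ∈ p.support) (hvb : v ≠ b) : b ∉ (p.takeUntil v h).support := by
  intro hmem
  have hspec := Walk.take_spec p h
  have hnodup := hp.support_nodup
  rw [← hspec, Walk.support_append] at hnodup
  have hb2 : b ∈ (p.dropUntil v h).support.tail :=
    end_mem_tail_support _ hvb
  exact (List.disjoint_of_nodup_append hnodup) hmem hb2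

lemma start_not_mem_dropUntil [DecidableEq V] {a b v : V} {p : G.Walk a b} (hp : p.IsPath)
    (h : v ∈ p.support) (hva : v ≠ a) : a ∉ (p.dropUntil v h).support := by
  intro hmem
  have hspec := Walk.take_spec p h
  have hnodup := hp.support_nodup
  rw [← hspec, Walk.support_append] at hnodup
  have ha1 : a ∈ (p.takeUntil v h).support := (p.takeUntil v h).start_mem_support
  have ha2 : a ∈ (p.dropUntil v h).support.tail := by
    have : a ∈ (p.dropUntil v h).support := hmem
    rw [(p.dropUntil v h).support_eq_cons] at this
    rcases List.mem_cons.mp this with rfl | h2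
    · exact absurd rfl hva
    · exact h2
  exact (List.disjoint_of_nodup_append hnodup) ha1 ha2

lemma conG_edge_cases [DecidableEq V] {x y : V} (hxy : G.Adj x y) {e : Sym2 V}
    (he : e ∈ (conG G x y).edgeSet) :
    (e ∈ G.edgeSet ∧ y ∉ e) ∨
      (∃ v, v ≠ x ∧ v ≠ y ∧ e = s(x, v) ∧ G.Adj y v ∧ e ∉ G.edgeSet) := by
  induction e with
  | _ u v =>
    have hadj : (conG G x y).Adj u v := he
    obtain ⟨⟨hu, hv, huv⟩, hd⟩ := conG_adj.mp hadj
    by_cases heG : G.Adj u v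
    · exact Or.inl ⟨heG, by simp [Sym2.mem_iff]; exact ⟨fun h => hu h.symm, fun h => hv h.symm⟩⟩
    · rcases hd with h1 | ⟨rfl, h1⟩ | ⟨rfl, h1⟩
      · exact absurd h1 heG
      · exact Or.inr ⟨v, fun hvx => huv hvx.symm, hv, rfl, h1, by simpa using heG⟩
      · exact Or.inr ⟨u, fun hux => huv hux, hu, Sym2.eq_swap, h1.symm, by
          simpa [Sym2.eq_swap] using heG⟩

lemma conG_edge_lt [Fintype V] [DecidableEq V] {x y : V} (hxy : G.Adj x y) :
    (conG G x y).edgeSet.ncard < G.edgeSet.ncard := by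
  classical
  set f : V → V := fun v => if v = x then y else v with hf
  set φ : Sym2 V → Sym2 V := fun e => if e ∈ G.edgeSet then e else Sym2.map f e with hφ
  have himg : ∀ e ∈ (conG G x y).edgeSet, φ e ∈ G.edgeSet \ {s(x, y)} := by
    intro e he
    rcases conG_edge_cases hxy he with ⟨h1, h2⟩ | ⟨v, hvx, hvy, rfl, hadj, hne⟩
    · refine ⟨by simpa [hφ, h1], ?_⟩
      simp only [Set.mem_singleton_iff, hφ, if_pos h1]
      rintro rfl
      exact h2 (by simp)
    · have : φ s(x, v) = s(y, v) := by
        simp only [hφ, if_neg hne, Sym2.map_pair_eq, hf]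
        congr 1 <;> simp [hvx]
      rw [this]
      refine ⟨G.mem_edgeSet.mpr hadj, ?_⟩
      simp only [Set.mem_singleton_iff, Sym2.eq_iff]
      rintro (⟨-, rfl⟩ | ⟨-, rfl⟩)
      · exact hvy rfl
      · exact hvx rfl
  have hinj : Set.InjOn φ (conG G x y).edgeSet := by
    intro e1 he1 e2 he2 heq
    rcases conG_edge_cases hxy he1 with ⟨h1, h2⟩ | ⟨v1, hv1x, hv1y, rfl, hadj1, hne1⟩ <;>
      rcases conG_edge_cases hxy he2 with ⟨h1', h2'⟩ | ⟨v2, hv2x, hv2y, rfl, hadj2, hne2⟩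
    · have a1 : φ e1 = e1 := if_pos h1
      have a2 : φ e2 = e2 := if_pos h1'
      exact (a1.symm.trans heq).trans a2
    · exfalso
      have a1 : φ e1 = e1 := if_pos h1
      have hφ2 : φ s(x, v2) = s(y, v2) := by
        simp only [hφ, if_neg hne2, Sym2.map_pair_eq, hf]
        congr 1 <;> simp [hv2x]
      have : e1 = s(y, v2) := a1.symm.trans (heq.trans hφ2)
      exact h2 (by rw [this]; simp)
    · exfalso
      have a2 : φ e2 = e2 := if_pos h1'
      have hφ1 : φ s(x, v1) = s(y, v1) := by
        simp only [hφ, if_neg hne1, Sym2.map_pair_eq, hf]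
        congr 1 <;> simp [hv1x]
      have : s(y, v1) = e2 := hφ1.symm.trans (heq.trans a2)
      exact h2' (by rw [← this]; simp)
    · have hφ1 : φ s(x, v1) = s(y, v1) := by
        simp only [hφ, if_neg hne1, Sym2.map_pair_eq, hf]
        congr 1 <;> simp [hv1x]
      have hφ2 : φ s(x, v2) = s(y, v2) := by
        simp only [hφ, if_neg hne2, Sym2.map_pair_eq, hf]
        congr 1 <;> simp [hv2x]
      have heq' : s(y, v1) = s(y, v2) := hφ1.symm.trans (heq.trans hφ2)
      rw [Sym2.eq_iff] at heq'
      rcases heq' with ⟨-, rfl⟩ | ⟨rfl, rfl⟩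
      · rfl
      · exact absurd rfl hv1y
  calc (conG G x y).edgeSet.ncard = (φ '' (conG G x y).edgeSet).ncard :=
        (Set.ncard_image_of_injOn hinj).symm
    _ ≤ (G.edgeSet \ {s(x, y)}).ncard := by
        apply Set.ncard_le_ncard _ ((G.edgeSet.toFinite).diff)
        rintro _ ⟨e, he, rfl⟩
        exact himg e he
    _ < G.edgeSet.ncard :=
        Set.ncard_diff_singleton_lt_of_mem (G.mem_edgeSet.mpr hxy) G.edgeSet.toFinite

section Menger
variable [Fintype V] [DecidableEq V]

lemma msep_con_pull_notx {x y : V} (hxy : G.Adj x y) {A B T : Set V}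
    (hT : MSep (conG G x y) (conP x y '' A) (conP x y '' B) T) (hx : x ∉ T) :
    MSep G A B (T \ {y}) := by
  intro a b ha hb w
  obtain ⟨w', hw'⟩ := conG_proj_walk hxy w
  obtain ⟨v, hv, hvT⟩ := hT (Set.mem_image_of_mem _ ha) (Set.mem_image_of_mem _ hb) w'
  obtain ⟨u, hu, rfl⟩ := hw' v hv
  by_cases huu : u = y
  · exfalso; rw [huu, conP_y] at hvT; exact hx hvT
  · rw [conP_eq_self huu] at hvT
    exact ⟨u, hu, hvT, by simp [huu]⟩

lemma msep_con_pull {x y : V} (hxy : G.Adj x y) {A B T : Set V}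
    (hT : MSep (conG G x y) (conP x y '' A) (conP x y '' B) T) :
    MSep G A B (T ∪ {y}) := by
  intro a b ha hb w
  obtain ⟨w', hw'⟩ := conG_proj_walk hxy w
  obtain ⟨v, hv, hvT⟩ := hT (Set.mem_image_of_mem _ ha) (Set.mem_image_of_mem _ hb) w'
  obtain ⟨u, hu, rfl⟩ := hw' v hv
  by_cases huu : u = y
  · exact ⟨u, hu, Or.inr (by simp [huu])⟩
  · rw [conP_eq_self huu] at hvT
    exact ⟨u, hu, Or.inl hvT⟩

def fan_transfer {G' : SimpleGraph V} (hle : G' ≤ G) {A B : Set V} {k : ℕ}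
    (F : Fan G' A B k) : Fan G A B k where
  a := F.a
  b := F.b
  P := fun i => (F.P i).transfer G
    (fun e he => (SimpleGraph.edgeSet_mono hle) ((F.P i).edges_subset_edgeSet he))
  ha := F.ha
  hb := F.hb
  hpath := fun i => by
    have h := F.hpath i
    rw [Walk.isPath_def] at h ⊢
    rwa [Walk.support_transfer]
  hdisj := by
    intro i j hij v hvi hvj
    rw [Walk.support_transfer] at hvi hvj
    exact F.hdisj i j hij v hvi hvj

lemma fan_b_inj {A B : Set V} {k : ℕ} (F : Fan G A B k) : Function.Injective F.b := by
  intro i j hij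
  by_contra hne
  exact F.hdisj i j hne (F.b i) ((F.P i).end_mem_support)
    (by rw [hij]; exact (F.P j).end_mem_support)

lemma fan_a_inj {A B : Set V} {k : ℕ} (F : Fan G A B k) : Function.Injective F.a := by
  intro i j hij
  by_contra hne
  exact F.hdisj i j hne (F.a i) ((F.P i).start_mem_support)
    (by rw [hij]; exact (F.P j).start_mem_support)

lemma fan_refine {A B : Set V} {k : ℕ} (F : Fan G A B k) :
    ∃ F' : Fan G A B k,
      (∀ i, ∀ v ∈ (F'.P i).support, (v ∈ A → v = F'.a i) ∧ (v ∈ B → v = F'.b i)) ∧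
      (∀ i, ∀ v ∈ (F'.P i).support, v ∈ (F.P i).support) := by
  have key : ∀ i, ∃ (a' : V) (b' : V) (p : G.Walk a' b'), a' ∈ A ∧ b' ∈ B ∧ p.IsPath ∧
      (∀ v ∈ p.support, v ∈ (F.P i).support) ∧
      (∀ v ∈ p.support, v ∈ A → v = a') ∧ (∀ v ∈ p.support, v ∈ B → v = b') := by
    intro i
    obtain ⟨a', b', p, h1, h2, h3, h4, _, h6, h7⟩ :=
      exists_trimmed_path A B (F.P i) (F.ha i) (F.hb i)
    exact ⟨a', b', p, h1, h2, h3, h4, h6, h7⟩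
  choose a' b' p h1 h2 h3 h4 h5 h6 using key
  exact ⟨⟨a', b', p, h1, h2, h3,
      fun i j hij v hvi hvj => F.hdisj i j hij v (h4 i v hvi) (h4 j v hvj)⟩,
    fun i v hv => ⟨h5 i v hv, h6 i v hv⟩, fun i v hv => h4 i v hv⟩

lemma fan_glue {A B S : Set V} {k : ℕ} (hS : MSep G A B S) (hcard : S.ncard = k)
    (F1 : Fan G A S k) (F2 : Fan G S B k) : Nonempty (Fan G A B k) := by
  classical
  obtain ⟨T1, hT1, -⟩ := fan_refine F1
  obtain ⟨T2, hT2, -⟩ := fan_refine F2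
  have hbinj : Function.Injective T1.b := fan_b_inj T1
  have hainj : Function.Injective T2.a := fan_a_inj T2
  have hsurj := surj_of_inj_ncard (Set.toFinite S) T2.a hainj T2.ha hcard
  have hσex : ∀ i, ∃ j, T2.a j = T1.b i := fun i => hsurj _ (T1.hb i)
  choose σ hσ using hσex
  have hσinj : Function.Injective σ := by
    intro i j hij
    apply hbinj
    rw [← hσ i, ← hσ j, hij]
  have claim1 : ∀ i j, ∀ v, v ∈ (T1.P i).support → v ∈ (T2.P j).support →
      v = T1.b i ∧ v = T2.a j := by
    intro i j v hvi hvj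
    by_cases hvS : v ∈ S
    · exact ⟨(hT1 i v hvi).2 hvS, (hT2 j v hvj).1 hvS⟩
    · exfalso
      obtain ⟨z, hz, hzS⟩ := hS (T1.ha i) (T2.hb j)
        (((T1.P i).takeUntil v hvi).append ((T2.P j).dropUntil v hvj))
      rw [Walk.mem_support_append_iff] at hz
      rcases hz with hz | hz
      · have hz1 : z ∈ (T1.P i).support := Walk.support_takeUntil_subset _ hvi hz
        have hzb : z = T1.b i := (hT1 i z hz1).2 hzS
        subst hzb
        exact end_not_mem_takeUntil (T1.hpath i) hvi (fun h => hvS (h ▸ T1.hb i)) hz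
      · have hz1 : z ∈ (T2.P j).support := Walk.support_dropUntil_subset _ hvj hz
        have hza : z = T2.a j := (hT2 j z hz1).1 hzS
        subst hza
        exact start_not_mem_dropUntil (T2.hpath j) hvj (fun h => hvS (h ▸ T2.ha j)) hz
  refine ⟨⟨T1.a, fun i => T2.b (σ i),
    fun i => (T1.P i).append ((T2.P (σ i)).copy (hσ i) rfl),
    T1.ha, fun i => T2.hb _, ?_, ?_⟩⟩
  · intro i
    apply isPath_append_of (T1.hpath i) (by rw [Walk.isPath_copy]; exact T2.hpath _)
    intro z hz1 hz2
    rw [Walk.support_copy] at hz2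
    exact (claim1 i (σ i) z hz1 hz2).1
  · intro i j hij v hvi hvj
    rw [Walk.mem_support_append_iff] at hvi hvj
    rcases hvi with h1 | h1 <;> rcases hvj with h2 | h2
    · exact T1.hdisj i j hij v h1 h2
    · rw [Walk.support_copy] at h2
      obtain ⟨e1, e2⟩ := claim1 i (σ j) v h1 h2
      exact hij (hbinj ((e1.symm.trans e2).trans (hσ j)))
    · rw [Walk.support_copy] at h1
      obtain ⟨e1, e2⟩ := claim1 j (σ i) v h2 h1
      exact hij (hbinj ((e1.symm.trans e2).trans (hσ i))).symm
    · rw [Walk.support_copy] at h1 h2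
      exact T2.hdisj (σ i) (σ j) (fun h => hij (hσinj h)) v h1 h2

lemma menger_edgeless {A B : Set V} {k : ℕ} (hE : G.edgeSet = ∅)
    (hsep : ∀ S : Set V, MSep G A B S → k ≤ S.ncard) : Nonempty (Fan G A B k) := by
  have hAB : MSep G A B (A ∩ B) := by
    intro a b ha hb w
    have hab := walk_end_eq_of_edgeless hE w
    subst hab
    exact ⟨a, w.start_mem_support, ha, hb⟩
  obtain ⟨g, hginj, hgmem⟩ := exists_inj_of_ncard (Set.toFinite _) (hsep _ hAB)
  exact ⟨⟨g, g, fun _ => Walk.nil, fun i => (hgmem i).1, fun i => (hgmem i).2,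
    fun _ => Walk.IsPath.nil, by
      intro i j hij v hvi hvj
      rw [Walk.support_nil, List.mem_singleton] at hvi hvj
      exact hij (hginj (by rw [← hvi, ← hvj]))⟩⟩

lemma msep_del_AS {x y : V} (hxy : G.Adj x y) {A B S W : Set V} (hS : MSep G A B S)
    (hx : x ∈ S) (hy : y ∈ S)
    (hW : MSep (G.deleteEdges {s(x, y)}) A S W) : MSep G A B W := by
  intro a b ha hb w
  obtain ⟨c, q, hc, hfirst, hsupp, hedges⟩ := exists_prefix_firstHit' S w (hS ha hb w)
  have hq : ∀ e ∈ q.edges, e ∈ (G.deleteEdges {s(x, y)}).edgeSet := by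
    intro e he
    rw [SimpleGraph.edgeSet_deleteEdges]
    refine ⟨q.edges_subset_edgeSet he, ?_⟩
    simp only [Set.mem_singleton_iff]
    rintro rfl
    have hxs := q.fst_mem_support_of_mem_edges he
    have hys := q.snd_mem_support_of_mem_edges he
    have h1 := hfirst x hxs hx
    have h2 := hfirst y hys hy
    exact hxy.ne (h1.trans h2.symm)
  obtain ⟨v, hv, hvW⟩ := hW ha hc (q.transfer _ hq)
  rw [Walk.support_transfer] at hv
  exact ⟨v, hsupp v hv, hvW⟩

lemma msep_del_SB {x y : V} (hxy : G.Adj x y) {A B S W : Set V} (hS : MSep G A B S)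
    (hx : x ∈ S) (hy : y ∈ S)
    (hW : MSep (G.deleteEdges {s(x, y)}) S B W) : MSep G A B W := by
  intro a b ha hb w
  have hhit : ∃ v ∈ w.reverse.support, v ∈ S := by
    obtain ⟨v, hv, hvS⟩ := hS ha hb w
    exact ⟨v, by rwa [Walk.support_reverse, List.mem_reverse], hvS⟩
  obtain ⟨c, q, hc, hfirst, hsupp, hedges⟩ := exists_prefix_firstHit' S w.reverse hhit
  have hq : ∀ e ∈ q.reverse.edges, e ∈ (G.deleteEdges {s(x, y)}).edgeSet := by
    intro e he
    rw [Walk.edges_reverse, List.mem_reverse] at he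
    rw [SimpleGraph.edgeSet_deleteEdges]
    refine ⟨q.edges_subset_edgeSet he, ?_⟩
    simp only [Set.mem_singleton_iff]
    rintro rfl
    have hxs := q.fst_mem_support_of_mem_edges he
    have hys := q.snd_mem_support_of_mem_edges he
    have h1 := hfirst x hxs hx
    have h2 := hfirst y hys hy
    exact hxy.ne (h1.trans h2.symm)
  obtain ⟨v, hv, hvW⟩ := hW hc hb (q.reverse.transfer _ hq)
  rw [Walk.support_transfer, Walk.support_reverse, List.mem_reverse] at hv
  have := hsupp v hv
  rw [Walk.support_reverse, List.mem_reverse] at this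
  exact ⟨v, this, hvW⟩

lemma fan_lift {x y : V} (hxy : G.Adj x y) {A B : Set V} {k : ℕ}
    (F : Fan (conG G x y) (conP x y '' A) (conP x y '' B) k) : Nonempty (Fan G A B k) := by
  classical
  have hne : x ≠ y := hxy.ne
  have hyfree : ∀ i, ∀ w ∈ (F.P i).support, w ≠ y := by
    intro i
    apply conG_no_y (F.P i)
    obtain ⟨u, hu, huP⟩ := F.ha i
    exact huP ▸ conP_ne_y hne u
  have hxuniq : ∀ i j, x ∈ (F.P i).support → x ∈ (F.P j).support → i = j := by
    intro i j hi hj; by_contra hij; exact F.hdisj i j hij x hi hj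
  have key : ∀ i, ∃ (α : V) (β : V) (Q : G.Walk α β), α ∈ A ∧ β ∈ B ∧ Q.IsPath ∧
      ∀ w ∈ Q.support, w ∈ (F.P i).support ∨ (w = y ∧ x ∈ (F.P i).support) := by
    intro i
    obtain ⟨q, hq⟩ := conG_lift hxy (F.P i)
    obtain ⟨ua, huaA, huaP⟩ := F.ha i
    obtain ⟨ub, hubB, hubP⟩ := F.hb i
    have step1 : ∃ (α : V) (q1 : G.Walk α (F.b i)), α ∈ A ∧
        ∀ w ∈ q1.support, w ∈ (F.P i).support ∨ (w = y ∧ x ∈ (F.P i).support) := by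
      by_cases haA : F.a i ∈ A
      · exact ⟨F.a i, q, haA, hq⟩
      · have hua : ua = y := by
          by_contra h
          rw [conP_eq_self h] at huaP; exact haA (huaP ▸ huaA)
        have hax : F.a i = x := by rw [← huaP, hua, conP_y]
        have hyA : y ∈ A := hua ▸ huaA
        by_cases hyq : y ∈ q.support
        · exact ⟨y, q.dropUntil y hyq, hyA,
            fun w hw => hq w (Walk.support_dropUntil_subset _ _ hw)⟩
        · refine ⟨y, Walk.cons (show G.Adj y (F.a i) by rw [hax]; exact hxy.symm) q, hyA, ?_⟩
          intro w hw
          rw [Walk.support_cons] at hw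
          rcases List.mem_cons.mp hw with rfl | hw'
          · refine Or.inr ⟨rfl, ?_⟩
            have hgen : ∀ l : List V, F.a i ∈ l → x ∈ l := fun l h => hax ▸ h
            exact hgen _ ((F.P i).start_mem_support)
          · exact hq w hw'
    obtain ⟨α, q1, hαA, hprop⟩ := step1
    have step2 : ∃ (β : V) (q2 : G.Walk α β), β ∈ B ∧
        ∀ w ∈ q2.support, w ∈ (F.P i).support ∨ (w = y ∧ x ∈ (F.P i).support) := by
      by_cases hbB : F.b i ∈ B
      · exact ⟨F.b i, q1, hbB, hprop⟩
      · have hub : ub = y := by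
          by_contra h
          rw [conP_eq_self h] at hubP; exact hbB (hubP ▸ hubB)
        have hbx : F.b i = x := by rw [← hubP, hub, conP_y]
        have hyB : y ∈ B := hub ▸ hubB
        by_cases hyq1 : y ∈ q1.support
        · exact ⟨y, q1.takeUntil y hyq1, hyB,
            fun w hw => hprop w (Walk.support_takeUntil_subset _ _ hw)⟩
        · refine ⟨y, q1.concat (show G.Adj (F.b i) y by rw [hbx]; exact hxy), hyB, ?_⟩
          intro w hw
          rw [Walk.support_concat] at hw
          rcases List.mem_append.mp hw with hw' | hw'
          · exact hprop w hw'
          · rw [List.mem_singleton] at hw'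
            subst hw'
            refine Or.inr ⟨rfl, ?_⟩
            have hgen : ∀ l : List V, F.b i ∈ l → x ∈ l := fun l h => hbx ▸ h
            exact hgen _ ((F.P i).end_mem_support)
    obtain ⟨β, q2, hβB, hprop2⟩ := step2
    exact ⟨α, β, q2.bypass, hαA, hβB, Walk.bypass_isPath _,
      fun w hw => hprop2 w (Walk.support_bypass_subset _ hw)⟩
  choose α β Q h1 h2 h3 h4 using key
  refine ⟨⟨α, β, Q, h1, h2, h3, ?_⟩⟩
  intro i j hij v hvi hvj
  rcases h4 i v hvi with hi | ⟨hvy, hxi⟩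
  · rcases h4 j v hvj with hj | hj
    · exact F.hdisj i j hij v hi hj
    · exact (hyfree i v hi) hj.1
  · rcases h4 j v hvj with hj | hj
    · exact (hyfree j v hj) hvy
    · exact hij (hxuniq i j hxi hj.2)

theorem menger_aux (k : ℕ) :
    ∀ (n : ℕ) (G : SimpleGraph V) (A B : Set V), G.edgeSet.ncard ≤ n →
      (∀ S : Set V, MSep G A B S → k ≤ S.ncard) → Nonempty (Fan G A B k) := by
  intro n
  induction n with
  | zero =>
    intro G A B hn hsep
    have hE : G.edgeSet = ∅ := by
      rw [← Set.ncard_eq_zero (G.edgeSet.toFinite)]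
      omega
    exact menger_edgeless hE hsep
  | succ n ih =>
    intro G A B hn hsep
    by_cases hE : G.edgeSet = ∅
    · exact menger_edgeless hE hsep
    · obtain ⟨e, he⟩ := Set.nonempty_iff_ne_empty.mpr hE
      induction e using Sym2.ind with
      | _ x y =>
      have hxy : G.Adj x y := G.mem_edgeSet.mp he
      by_cases hcon : ∀ T : Set V,
          MSep (conG G x y) (conP x y '' A) (conP x y '' B) T → k ≤ T.ncard
      · have hHn : (conG G x y).edgeSet.ncard ≤ n := by
          have := conG_edge_lt (G := G) hxy
          omega
        obtain ⟨F⟩ := ih (conG G x y) (conP x y '' A) (conP x y '' B) hHn hcon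
        exact fan_lift hxy F
      · push_neg at hcon
        obtain ⟨T, hT, hTcard⟩ := hcon
        have hxT : x ∈ T := by
          by_contra hx
          have h1 := hsep _ (msep_con_pull_notx hxy hT hx)
          have h2 : (T \ {y}).ncard ≤ T.ncard :=
            Set.ncard_le_ncard Set.diff_subset T.toFinite
          omega
        have hSsep : MSep G A B (T ∪ {y}) := msep_con_pull hxy hT
        have hScard : (T ∪ {y}).ncard = k := by
          have h1 := hsep _ hSsep
          have h2 : (T ∪ {y}).ncard ≤ T.ncard + 1 :=
            (Set.ncard_union_le _ _).trans (by simp)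
          omega
        have hxS : x ∈ T ∪ {y} := Or.inl hxT
        have hyS : y ∈ T ∪ {y} := Or.inr rfl
        have hG'n : (G.deleteEdges {s(x, y)}).edgeSet.ncard ≤ n := by
          have hlt : (G.deleteEdges {s(x, y)}).edgeSet.ncard < G.edgeSet.ncard := by
            rw [SimpleGraph.edgeSet_deleteEdges]
            exact Set.ncard_diff_singleton_lt_of_mem he G.edgeSet.toFinite
          omega
        obtain ⟨F1⟩ := ih (G.deleteEdges {s(x, y)}) A (T ∪ {y}) hG'n
          (fun W hW => hsep W (msep_del_AS hxy hSsep hxS hyS hW))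
        obtain ⟨F2⟩ := ih (G.deleteEdges {s(x, y)}) (T ∪ {y}) B hG'n
          (fun W hW => hsep W (msep_del_SB hxy hSsep hxS hyS hW))
        exact fan_glue hSsep hScard (fan_transfer (SimpleGraph.deleteEdges_le _) F1)
          (fan_transfer (SimpleGraph.deleteEdges_le _) F2)

theorem menger (G : SimpleGraph V) (A B : Set V) (k : ℕ)
    (hsep : ∀ S : Set V, MSep G A B S → k ≤ S.ncard) : Nonempty (Fan G A B k) :=
  menger_aux k G.edgeSet.ncard G A B le_rfl hsep

end Menger

section Cycles
variable [DecidableEq V]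

lemma mem_support_tail_closed {v : V} {c : G.Walk v v} (hc : ¬ c.Nil) {w : V} :
    w ∈ c.support.tail ↔ w ∈ c.support := by
  cases c with
  | nil => simp at hc
  | cons h p =>
    rw [Walk.support_cons]
    simp only [List.tail_cons, List.mem_cons]
    constructor
    · exact Or.inr
    · rintro (rfl | h2)
      · exact p.end_mem_support
      · exact h2

lemma mem_support_rotate_iff {v s : V} {C : G.Walk v v} (hC : C.IsCycle)
    (hs : s ∈ C.support) {w : V} :
    w ∈ (C.rotate _ hs).support ↔ w ∈ C.support := by
  rw [← mem_support_tail_closed (hC.rotate hs).not_nil, ← mem_support_tail_closed hC.not_nil]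
  exact (Walk.support_rotate C _ hs).mem_iff

lemma length_rotate {v s : V} (C : G.Walk v v) (hs : s ∈ C.support) :
    (C.rotate _ hs).length = C.length := by
  have h1 := congrArg Walk.length (Walk.take_spec C hs)
  rw [Walk.length_append] at h1
  unfold Walk.rotate
  rw [Walk.length_append]
  omega

lemma takeUntil_dropUntil_inter {a b z : V} {p : G.Walk a b} (hp : p.IsPath)
    (hz : z ∈ p.support) {w : V} (h1 : w ∈ (p.takeUntil z hz).support)
    (h2 : w ∈ (p.dropUntil z hz).support) : w = z := by
  have hnodup := hp.support_nodup
  rw [← Walk.take_spec p hz, Walk.support_append] at hnodup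
  rcases List.mem_cons.mp (((p.dropUntil z hz).support_eq_cons) ▸ h2) with rfl | h2'
  · rfl
  · exact absurd h2' (fun hh => (List.disjoint_of_nodup_append hnodup) h1 hh)

lemma length_take_add_drop {a b z : V} (p : G.Walk a b) (hz : z ∈ p.support) :
    (p.takeUntil z hz).length + (p.dropUntil z hz).length = p.length := by
  have h1 := congrArg Walk.length (Walk.take_spec p hz)
  rwa [Walk.length_append] at h1

/-- Splitting a cycle at two distinct vertices into two arcs. -/
lemma cycle_split {v : V} {C : G.Walk v v} (hC : C.IsCycle) {s t : V}
    (hs : s ∈ C.support) (ht : t ∈ C.support) (hst : s ≠ t) :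
    ∃ (p : G.Walk s t) (q : G.Walk t s), p.IsPath ∧ q.IsPath ∧
      (∀ w, w ∈ p.support → w ∈ q.support → w = s ∨ w = t) ∧
      p.length + q.length = C.length ∧
      (∀ w, w ∈ p.support → w ∈ C.support) ∧ (∀ w, w ∈ q.support → w ∈ C.support) ∧
      (∀ w, w ∈ C.support → w ∈ p.support ∨ w ∈ q.support) := by
  set C' := C.rotate _ hs with hC'def
  have hC' : C'.IsCycle := hC.rotate hs
  have hmem : ∀ w, w ∈ C'.support ↔ w ∈ C.support := fun w => mem_support_rotate_iff hC hs
  have ht' : t ∈ C'.support := (hmem t).mpr ht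
  set p := C'.takeUntil t ht' with hpdef
  set q := C'.dropUntil t ht' with hqdef
  have hspec : p.append q = C' := Walk.take_spec C' ht'
  have hsupp : C'.support = p.support ++ q.support.tail := by
    rw [← hspec, Walk.support_append]
  have htail : C'.support.tail = p.support.tail ++ q.support.tail := by
    have h1 : C'.support = s :: C'.support.tail := C'.support_eq_cons
    have h2 : p.support = s :: p.support.tail := p.support_eq_cons
    have h3 : C'.support = s :: (p.support.tail ++ q.support.tail) := by
      rw [hsupp, h2]; rfl
    exact (List.cons_eq_cons.mp (h1.symm.trans h3)).2
  have htnodup : (p.support.tail ++ q.support.tail).Nodup := htail ▸ hC'.support_nodup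
  have hdisj := List.disjoint_of_nodup_append htnodup
  have hsq : s ∈ q.support.tail := end_mem_tail_support q (Ne.symm hst)
  have hppath : p.IsPath := by
    rw [Walk.isPath_def, p.support_eq_cons]
    refine List.nodup_cons.mpr ⟨fun hmem' => ?_, (List.nodup_append.mp htnodup).1⟩
    exact (hdisj hmem') hsq
  have hqt : t ∉ q.support.tail := by
    intro hmem'
    have htp : t ∈ p.support.tail := by
      rcases List.mem_cons.mp ((p.support_eq_cons) ▸ p.end_mem_support) with h | h
      · exact absurd h.symm hst
      · exact h
    exact (hdisj htp) hmem'
  have hqpath : q.IsPath := by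
    rw [Walk.isPath_def, q.support_eq_cons]
    exact List.nodup_cons.mpr ⟨hqt, (List.nodup_append.mp htnodup).2.1⟩
  refine ⟨p, q, hppath, hqpath, ?_, ?_, ?_, ?_, ?_⟩
  · intro w hwp hwq
    rcases List.mem_cons.mp ((p.support_eq_cons) ▸ hwp) with rfl | hwp'
    · exact Or.inl rfl
    · rcases List.mem_cons.mp ((q.support_eq_cons) ▸ hwq) with rfl | hwq'
      · exact Or.inr rfl
      · exact absurd hwq' (hdisj hwp')
  · have h4 : p.length + q.length = C'.length := length_take_add_drop C' ht'
    have hr : C'.length = C.length := length_rotate C hs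
    omega
  · intro w hw
    exact (hmem w).mp (Walk.support_takeUntil_subset _ ht' hw)
  · intro w hw
    exact (hmem w).mp (Walk.support_dropUntil_subset _ ht' hw)
  · intro w hw
    rw [← hmem w, hsupp] at hw
    rcases List.mem_append.mp hw with h | h
    · exact Or.inl h
    · exact Or.inr (List.mem_of_mem_tail h)

/-- From a split pair of arcs with odd arc containing an interior point `z`, produce a pair of
even internally disjoint paths between two of the three marked vertices. -/
lemma even_pair_aux {a b z : V} (p : G.Walk a b) (q : G.Walk b a)
    (hp : p.IsPath) (hq : q.IsPath)
    (hpq : ∀ w, w ∈ p.support → w ∈ q.support → w = a ∨ w = b)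
    (hsum : Even (p.length + q.length)) (hodd : ¬ Even p.length)
    (hz : z ∈ p.support) (hza : z ≠ a) (hzb : z ≠ b) :
    ∃ (s' t' : V) (p1 p2 : G.Walk s' t'), s' ≠ t' ∧
      ((s' = a ∧ t' = z) ∨ (s' = z ∧ t' = b)) ∧
      p1.IsPath ∧ p2.IsPath ∧
      (∀ w, w ∈ p1.support → w ∈ p2.support → w = s' ∨ w = t') ∧
      Even p1.length ∧ Even p2.length ∧
      (∀ w, w ∈ p1.support → w ∈ p.support ∨ w ∈ q.support) ∧
      (∀ w, w ∈ p2.support → w ∈ p.support ∨ w ∈ q.support) := by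
  have hqodd : ¬ Even q.length := fun h => hodd ((Nat.even_add.mp hsum).mpr h)
  have hanp : a ∉ (p.dropUntil z hz).support := start_not_mem_dropUntil hp hz hza
  have hbnp : b ∉ (p.takeUntil z hz).support := end_not_mem_takeUntil hp hz hzb
  have hlen := length_take_add_drop p hz
  by_cases hα : Even (p.takeUntil z hz).length
  · -- s' = a, t' = z
    refine ⟨a, z, p.takeUntil z hz, ((p.dropUntil z hz).append q).reverse, Ne.symm hza,
      Or.inl ⟨rfl, rfl⟩, hp.takeUntil hz, ?_, ?_, hα, ?_, ?_, ?_⟩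
    · apply Walk.IsPath.reverse
      apply isPath_append_of (hp.dropUntil hz) hq
      intro w hw1 hw2
      rcases hpq w (Walk.support_dropUntil_subset _ hz hw1) hw2 with rfl | rfl
      · exact absurd hw1 hanp
      · rfl
    · intro w hw1 hw2
      rw [Walk.support_reverse, List.mem_reverse, Walk.mem_support_append_iff] at hw2
      rcases hw2 with hw2 | hw2
      · exact Or.inr (takeUntil_dropUntil_inter hp hz hw1 hw2)
      · rcases hpq w (Walk.support_takeUntil_subset _ hz hw1) hw2 with rfl | rfl
        · exact Or.inl rfl
        · exact absurd hw1 hbnp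
    · rw [Walk.length_reverse, Walk.length_append]
      rcases Nat.not_even_iff_odd.mp hodd with ⟨m, hm⟩
      rcases Nat.not_even_iff_odd.mp hqodd with ⟨m', hm'⟩
      rcases hα with ⟨c, hc⟩
      refine ⟨(m - c) + m' + 1, by omega⟩
    · intro w hw
      exact Or.inl (Walk.support_takeUntil_subset _ hz hw)
    · intro w hw
      rw [Walk.support_reverse, List.mem_reverse, Walk.mem_support_append_iff] at hw
      rcases hw with hw | hw
      · exact Or.inl (Walk.support_dropUntil_subset _ hz hw)
      · exact Or.inr hw
  · -- s' = z, t' = b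
    refine ⟨z, b, p.dropUntil z hz, (p.takeUntil z hz).reverse.append q.reverse, hzb,
      Or.inr ⟨rfl, rfl⟩, hp.dropUntil hz, ?_, ?_, ?_, ?_, ?_, ?_⟩
    · apply isPath_append_of (hp.takeUntil hz).reverse hq.reverse
      intro w hw1 hw2
      rw [Walk.support_reverse, List.mem_reverse] at hw1 hw2
      rcases hpq w (Walk.support_takeUntil_subset _ hz hw1) hw2 with rfl | rfl
      · rfl
      · exact absurd hw1 hbnp
    · intro w hw1 hw2
      rw [Walk.mem_support_append_iff] at hw2
      rcases hw2 with hw2 | hw2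
      · rw [Walk.support_reverse, List.mem_reverse] at hw2
        exact Or.inl (takeUntil_dropUntil_inter hp hz hw2 hw1)
      · rw [Walk.support_reverse, List.mem_reverse] at hw2
        rcases hpq w (Walk.support_dropUntil_subset _ hz hw1) hw2 with rfl | rfl
        · exact absurd hw1 hanp
        · exact Or.inr rfl
    · rcases Nat.not_even_iff_odd.mp hodd with ⟨m, hm⟩
      rcases Nat.not_even_iff_odd.mp hα with ⟨c, hc⟩
      exact ⟨m - c, by omega⟩
    · rw [Walk.length_append, Walk.length_reverse, Walk.length_reverse]
      rcases Nat.not_even_iff_odd.mp hα with ⟨c, hc⟩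
      rcases Nat.not_even_iff_odd.mp hqodd with ⟨m', hm'⟩
      exact ⟨c + m' + 1, by omega⟩
    · intro w hw
      exact Or.inl (Walk.support_dropUntil_subset _ hz hw)
    · intro w hw
      rw [Walk.mem_support_append_iff] at hw
      rcases hw with hw | hw
      · rw [Walk.support_reverse, List.mem_reverse] at hw
        exact Or.inl (Walk.support_takeUntil_subset _ hz hw)
      · rw [Walk.support_reverse, List.mem_reverse] at hw
        exact Or.inr hw

end Cycles

section EvenPair
variable [DecidableEq V]

lemma length_pos_of_ne {u v : V} {p : G.Walk u v} (h : u ≠ v) : 0 < p.length :=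
  Nat.pos_of_ne_zero (fun h0 => h (Walk.eq_of_length_eq_zero h0))

lemma even_pair {v : V} {C : G.Walk v v} (hC : C.IsCycle) (hCeven : Even C.length)
    (u : Fin 3 → V) (huC : ∀ i, u i ∈ C.support) (huinj : Function.Injective u) :
    ∃ (s t : V) (i j : Fin 3), i ≠ j ∧ s = u i ∧ t = u j ∧ s ≠ t ∧
      ∃ (p1 p2 : G.Walk s t), p1.IsPath ∧ p2.IsPath ∧
        (∀ w, w ∈ p1.support → w ∈ p2.support → w = s ∨ w = t) ∧
        Even p1.length ∧ Even p2.length ∧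
        (∀ w, w ∈ p1.support → w ∈ C.support) ∧ (∀ w, w ∈ p2.support → w ∈ C.support) := by
  have h01 : u 0 ≠ u 1 := fun h => by simpa using huinj h
  have h02 : u 0 ≠ u 2 := fun h => by simpa using huinj h
  have h12 : u 1 ≠ u 2 := fun h => by simpa using huinj h
  obtain ⟨p, q, hpp, hqp, hpq, hsum, hpC, hqC, hcov⟩ :=
    cycle_split hC (huC 0) (huC 1) h01
  have hsum' : Even (p.length + q.length) := hsum ▸ hCeven
  by_cases hpe : Even p.length
  · refine ⟨u 0, u 1, 0, 1, by decide, rfl, rfl, h01, p, q.reverse, hpp, hqp.reverse, ?_,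
      hpe, ?_, hpC, ?_⟩
    · intro w hw1 hw2
      rw [Walk.support_reverse, List.mem_reverse] at hw2
      exact hpq w hw1 hw2
    · rw [Walk.length_reverse]
      exact (Nat.even_add.mp hsum').mp hpe
    · intro w hw
      rw [Walk.support_reverse, List.mem_reverse] at hw
      exact hqC w hw
  · rcases hcov (u 2) (huC 2) with hz | hz
    · obtain ⟨s', t', p1, p2, hst, hloc, h1, h2, h3, h4, h5, h6, h7⟩ :=
        even_pair_aux p q hpp hqp hpq hsum' hpe hz h02.symm h12.symm
      rcases hloc with ⟨rfl, rfl⟩ | ⟨rfl, rfl⟩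
      · exact ⟨u 0, u 2, 0, 2, by decide, rfl, rfl, hst, p1, p2, h1, h2, h3, h4, h5,
          fun w hw => (h6 w hw).elim (hpC w) (hqC w),
          fun w hw => (h7 w hw).elim (hpC w) (hqC w)⟩
      · exact ⟨u 2, u 1, 2, 1, by decide, rfl, rfl, hst, p1, p2, h1, h2, h3, h4, h5,
          fun w hw => (h6 w hw).elim (hpC w) (hqC w),
          fun w hw => (h7 w hw).elim (hpC w) (hqC w)⟩
    · have hqe : ¬ Even q.length := fun h => hpe ((Nat.even_add.mp hsum').mpr h)
      have hsum'' : Even (q.length + p.length) := by rwa [Nat.add_comm] at hsum'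
      obtain ⟨s', t', p1, p2, hst, hloc, h1, h2, h3, h4, h5, h6, h7⟩ :=
        even_pair_aux q p hqp hpp
          (fun w hw1 hw2 => ((hpq w hw2 hw1).elim Or.inr Or.inl)) hsum'' hqe hz
          h12.symm h02.symm
      rcases hloc with ⟨rfl, rfl⟩ | ⟨rfl, rfl⟩
      · exact ⟨u 1, u 2, 1, 2, by decide, rfl, rfl, hst, p1, p2, h1, h2, h3, h4, h5,
          fun w hw => (h6 w hw).elim (hqC w) (hpC w),
          fun w hw => (h7 w hw).elim (hqC w) (hpC w)⟩
      · exact ⟨u 2, u 0, 2, 0, by decide, rfl, rfl, hst, p1, p2, h1, h2, h3, h4, h5,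
          fun w hw => (h6 w hw).elim (hqC w) (hpC w),
          fun w hw => (h7 w hw).elim (hqC w) (hpC w)⟩

end EvenPair

section Theta
variable [DecidableEq V]

lemma fin2_cases : ∀ i : Fin 2, i = 0 ∨ i = 1 := by decide

lemma path_ne_of_pos {u v : V} {p : G.Walk u v} (hp : p.IsPath) (h : 0 < p.length) :
    u ≠ v := by
  rintro rfl
  rw [Walk.isPath_iff_eq_nil] at hp
  subst hp
  simp at h

lemma k23Based_of_theta {s t : V} (hst : s ≠ t) (p : Fin 3 → G.Walk s t)
    (hpath : ∀ j, (p j).IsPath)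
    (heven : ∀ j, Even (p j).length) (hpos : ∀ j, 0 < (p j).length)
    (hdisj : ∀ j j', j ≠ j' → ∀ w, w ∈ (p j).support → w ∈ (p j').support →
      w = s ∨ w = t) :
    K23Based G := by
  classical
  have hdecomp : ∀ j, ∃ (vj : V) (h : G.Adj s vj) (q : G.Walk vj t),
      p j = Walk.cons h q ∧ (p j).length = q.length + 1 := by
    intro j
    cases hpj : p j with
    | nil => exact absurd rfl hst
    | cons h q => exact ⟨_, h, q, rfl, by simp⟩
  choose vv adj qq hpj hlen using hdecomp
  have hsupp : ∀ j, (p j).support = s :: (qq j).support := by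
    intro j; rw [hpj j, Walk.support_cons]
  have hqpath : ∀ j, (qq j).IsPath ∧ s ∉ (qq j).support := by
    intro j
    have := hpath j
    rw [hpj j, Walk.cons_isPath_iff] at this
    exact this
  have hqlen : ∀ j, ¬ Even (qq j).length := by
    intro j he
    have h1 := heven j
    rw [hlen j] at h1
    rcases he with ⟨c, hc⟩
    rcases h1 with ⟨d, hd⟩
    omega
  have hvs : ∀ j, vv j ≠ s := by
    intro j h
    exact (hqpath j).2 (h ▸ (qq j).start_mem_support)
  have hvt : ∀ j, vv j ≠ t := by
    intro j
    apply path_ne_of_pos (hqpath j).1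
    have h1 := hpos j
    have h2 := hqlen j
    have h3 := hlen j
    rcases Nat.even_or_odd (qq j).length with h | h
    · exact absurd h h2
    · rcases h with ⟨c, hc⟩; omega
  have hqsubp : ∀ j, ∀ w ∈ (qq j).support, w ∈ (p j).support := by
    intro j w hw; rw [hsupp j]; exact List.mem_cons_of_mem _ hw
  have hvmem : ∀ j, vv j ∈ (p j).support := fun j => hqsubp j _ ((qq j).start_mem_support)
  have hvvinj : Function.Injective vv := by
    intro j j' h
    by_contra hne
    rcases hdisj j j' hne (vv j) (hvmem j) (h ▸ hvmem j') with h1 | h1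
    · exact hvs j h1
    · exact hvt j h1
  set f : Fin 2 ⊕ Fin 3 → V := Sum.elim (fun i => if i = 0 then s else t) vv with hf
  have hf0 : f (Sum.inl 0) = s := rfl
  have hf1 : f (Sum.inl 1) = t := rfl
  have hfr : ∀ j, f (Sum.inr j) = vv j := fun j => rfl
  have finj : Function.Injective f := by
    rintro (i | j) (i' | j') hab
    · rcases fin2_cases i with rfl | rfl <;> rcases fin2_cases i' with rfl | rfl <;>
        first
          | rfl
          | (exact absurd hab hst) | (exact absurd hab.symm hst)
    · exfalso
      rcases fin2_cases i with rfl | rfl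
      · exact hvs j' hab.symm
      · exact hvt j' hab.symm
    · exfalso
      rcases fin2_cases i' with rfl | rfl
      · exact hvs j hab
      · exact hvt j hab
    · exact congrArg Sum.inr (hvvinj hab)
  -- the walk family
  have hWW : ∀ (i : Fin 2) (j : Fin 3), ∃ W : G.Walk (f (Sum.inl i)) (f (Sum.inr j)),
      W.IsPath ∧ Odd W.length ∧
      (∀ w, w ∈ W.support ↔ (i = 0 ∧ (w = s ∨ w = vv j)) ∨ (i = 1 ∧ w ∈ (qq j).support)) := by
    intro i j
    rcases fin2_cases i with rfl | rfl
    · refine ⟨(Walk.cons (adj j) Walk.nil).copy hf0.symm (hfr j).symm, ?_, ?_, ?_⟩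
      · rw [Walk.isPath_copy, Walk.cons_isPath_iff]
        exact ⟨Walk.IsPath.nil, by simp [Ne.symm (hvs j)]⟩
      · rw [Walk.length_copy]
        simp [Nat.odd_iff]
      · intro w
        rw [Walk.support_copy, Walk.support_cons, Walk.support_nil]
        constructor
        · intro hw
          rcases List.mem_cons.mp hw with rfl | hw
          · exact Or.inl ⟨rfl, Or.inl rfl⟩
          · rcases List.mem_cons.mp hw with rfl | hw
            · exact Or.inl ⟨rfl, Or.inr rfl⟩
            · simp at hw
        · rintro (⟨-, hw⟩ | ⟨h0, -⟩)
          · rcases hw with rfl | rfl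
            · exact List.mem_cons_self
            · exact List.mem_cons_of_mem _ (List.mem_cons_self)
          · exact absurd h0 (by decide)
    · refine ⟨(qq j).reverse.copy hf1.symm (hfr j).symm, ?_, ?_, ?_⟩
      · rw [Walk.isPath_copy]
        exact (hqpath j).1.reverse
      · rw [Walk.length_copy, Walk.length_reverse]
        rw [← Nat.not_even_iff_odd]
        exact hqlen j
      · intro w
        rw [Walk.support_copy, Walk.support_reverse, List.mem_reverse]
        constructor
        · intro h; exact Or.inr ⟨rfl, h⟩
        · rintro (⟨h0, -⟩ | ⟨-, h⟩)
          · exact absurd h0 (by decide)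
          · exact h
        
  choose WW hWWpath hWWodd hWWsupp using hWW
  -- cross-support key
  have key4 : ∀ (i i' : Fin 2) (j j' : Fin 3), (i ≠ i' ∨ j ≠ j') → ∀ w,
      w ∈ (WW i j).support → w ∈ (WW i' j').support →
      (w = f (Sum.inl i) ∨ w = f (Sum.inr j)) ∧
      (w = f (Sum.inl i') ∨ w = f (Sum.inr j')) := by
    intro i i' j j' hne w hw hw'
    rw [hWWsupp] at hw hw'
    rcases hw with ⟨hi, hw⟩ | ⟨hi, hw⟩ <;> rcases hw' with ⟨hi', hw'⟩ | ⟨hi', hw'⟩ <;>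
        subst hi <;> subst hi'
    · -- both i = 0
      have hjj : j ≠ j' := by rcases hne with h | h; exacts [absurd rfl h, h]
      rcases hw with rfl | rfl <;> rcases hw' with h' | h'
      · exact ⟨Or.inl hf0.symm, Or.inl hf0.symm⟩
      · exact ⟨Or.inl hf0.symm, Or.inl hf0.symm⟩
      · exact absurd (h'.symm) (Ne.symm (hvs j))
      · exact absurd (hvvinj h') hjj
    · -- i = 0, i' = 1 : w ∈ {s, vv j} and w ∈ qq j'
      rcases hw with rfl | rfl
      · exact absurd hw' (hqpath j').2
      · by_cases hjj : j = j'
        · subst hjj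
          exact ⟨Or.inr (hfr j).symm, Or.inr (hfr j).symm⟩
        · exfalso
          rcases hdisj j' j (Ne.symm hjj) (vv j) (hqsubp j' _ hw') (hvmem j) with h1 | h1
          · exact hvs j h1
          · exact hvt j h1
    · -- i = 1, i' = 0
      rcases hw' with rfl | rfl
      · exact absurd hw (hqpath j).2
      · by_cases hjj : j = j'
        · subst hjj
          exact ⟨Or.inr (hfr j).symm, Or.inr (hfr j).symm⟩
        · exfalso
          rcases hdisj j j' hjj (vv j') (hqsubp j _ hw) (hvmem j') with h1 | h1
          · exact hvs j' h1
          · exact hvt j' h1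
    · -- both i = 1
      have hjj : j ≠ j' := by rcases hne with h | h; exacts [absurd rfl h, h]
      rcases hdisj j j' hjj w (hqsubp j _ hw) (hqsubp j' _ hw') with rfl | rfl
      · exact absurd hw (hqpath j).2
      · exact ⟨Or.inl hf1.symm, Or.inl hf1.symm⟩
  unfold K23Based IsBasedOn HasSubdiv
  refine ⟨⟨f, finj⟩, fun a b hab =>
    match a, b, hab with
    | Sum.inl i, Sum.inr j, _ => WW i j
    | Sum.inr j, Sum.inl i, _ => (WW i j).reverse
    | Sum.inl _, Sum.inl _, hab => absurd hab (by simp)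
    | Sum.inr _, Sum.inr _, hab => absurd hab (by simp), ?_, ?_, ?_, ?_⟩
  · rintro (i | j) (i' | j') hab
    · exact absurd hab (by simp)
    · exact hWWpath i j'
    · exact (hWWpath i' j).reverse
    · exact absurd hab (by simp)
  · rintro (i | j) (i' | j') hab
    · exact absurd hab (by simp)
    · exact hWWodd i j'
    · rw [Walk.length_reverse]; exact hWWodd i' j
    · exact absurd hab (by simp)
  · rintro (i | j) (i' | j') hab c hc
    · exact absurd hab (by simp)
    · -- a = inl i, b = inr j'
      rw [hWWsupp] at hc
      obtain ci | cj := c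
      · rcases hc with ⟨rfl, hw⟩ | ⟨rfl, hw⟩
        · rcases hw with hw | hw
          · rcases fin2_cases ci with rfl | rfl
            · exact Or.inl rfl
            · exact absurd (hf1.symm.trans hw) (Ne.symm hst)
          · rcases fin2_cases ci with rfl | rfl
            · exact absurd (hf0.symm.trans hw) (Ne.symm (hvs j'))
            · exact absurd (hf1.symm.trans hw) (Ne.symm (hvt j'))
        · rcases fin2_cases ci with rfl | rfl
          · exact absurd (hf0 ▸ hw) (hqpath j').2
          · exact Or.inl rfl
      · rcases hc with ⟨rfl, hw⟩ | ⟨rfl, hw⟩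
        · rcases hw with hw | hw
          · exact absurd ((hfr cj).symm.trans hw) (hvs cj)
          · exact Or.inr (congrArg Sum.inr (hvvinj ((hfr cj).symm.trans hw)))
        · replace hw : vv cj ∈ (qq j').support := hw
          by_cases hjj : cj = j'
          · exact Or.inr (congrArg Sum.inr hjj)
          · exfalso
            rcases hdisj j' cj (Ne.symm hjj) (vv cj) (hqsubp j' _ hw) (hvmem cj) with h1 | h1
            · exact hvs cj h1
            · exact hvt cj h1
    · -- a = inr j, b = inl i'
      rw [Walk.support_reverse, List.mem_reverse, hWWsupp] at hc
      obtain ci | cj := c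
      · rcases hc with ⟨rfl, hw⟩ | ⟨rfl, hw⟩
        · rcases hw with hw | hw
          · rcases fin2_cases ci with rfl | rfl
            · exact Or.inr rfl
            · exact absurd (hf1.symm.trans hw) (Ne.symm hst)
          · rcases fin2_cases ci with rfl | rfl
            · exact absurd (hf0.symm.trans hw) (Ne.symm (hvs j))
            · exact absurd (hf1.symm.trans hw) (Ne.symm (hvt j))
        · rcases fin2_cases ci with rfl | rfl
          · exact absurd (hf0 ▸ hw) (hqpath j).2
          · exact Or.inr rfl
      · rcases hc with ⟨rfl, hw⟩ | ⟨rfl, hw⟩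
        · rcases hw with hw | hw
          · exact absurd ((hfr cj).symm.trans hw) (hvs cj)
          · exact Or.inl (congrArg Sum.inr (hvvinj ((hfr cj).symm.trans hw)))
        · replace hw : vv cj ∈ (qq j).support := hw
          by_cases hjj : cj = j
          · exact Or.inl (congrArg Sum.inr hjj)
          · exfalso
            rcases hdisj j cj (Ne.symm hjj) (vv cj) (hqsubp j _ hw) (hvmem cj) with h1 | h1
            · exact hvs cj h1
            · exact hvt cj h1
    · exact absurd hab (by simp)
  · rintro (i | j) (i' | j') hab
    · exact absurd hab (by simp)
    · rintro (i2 | j2) (i2' | j2') hab' hne w hw hw'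
      · exact absurd hab' (by simp)
      · have hpair : i ≠ i2 ∨ j' ≠ j2' := by
          by_contra hcc
          push_neg at hcc
          exact hne (by rw [hcc.1, hcc.2])
        exact key4 i i2 j' j2' hpair w hw hw'
      · rw [Walk.support_reverse, List.mem_reverse] at hw'
        have hpair : i ≠ i2' ∨ j' ≠ j2 := by
          by_contra hcc
          push_neg at hcc
          apply hne
          rw [hcc.1, hcc.2]
          exact Sym2.eq_swap
        obtain ⟨ha, hb⟩ := key4 i i2' j' j2 hpair w hw hw'
        exact ⟨ha, hb.symm⟩
      · exact absurd hab' (by simp)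
    · rintro (i2 | j2) (i2' | j2') hab' hne w hw hw'
      · exact absurd hab' (by simp)
      · rw [Walk.support_reverse, List.mem_reverse] at hw
        have hpair : i' ≠ i2 ∨ j ≠ j2' := by
          by_contra hcc
          push_neg at hcc
          apply hne
          rw [hcc.1, hcc.2]
          exact Sym2.eq_swap
        obtain ⟨ha, hb⟩ := key4 i' i2 j j2' hpair w hw hw'
        exact ⟨ha.symm, hb⟩
      · rw [Walk.support_reverse, List.mem_reverse] at hw hw'
        have hpair : i' ≠ i2' ∨ j ≠ j2 := by
          by_contra hcc
          push_neg at hcc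
          exact hne (by rw [hcc.1, hcc.2])
        obtain ⟨ha, hb⟩ := key4 i' i2' j j2 hpair w hw hw'
        exact ⟨ha.symm, hb.symm⟩
      · exact absurd hab' (by simp)
    · exact absurd hab (by simp)

end Theta

lemma fin3_cases : ∀ j : Fin 3, j = 0 ∨ j = 1 ∨ j = 2 := by decide

lemma cycle_exists_avoid [Fintype V] {v : V} {C : G.Walk v v} (hC : C.IsCycle) (S : Set V)
    (hS : S.ncard ≤ 2) : ∃ a ∈ C.support, a ∉ S := by
  classical
  by_contra h
  push_neg at h
  have hsub : (↑C.support.tail.toFinset : Set V) ⊆ S := by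
    intro a ha
    rw [Finset.mem_coe, List.mem_toFinset] at ha
    exact h a (List.mem_of_mem_tail ha)
  have hcard : C.support.tail.toFinset.card = C.support.tail.length :=
    List.toFinset_card_of_nodup hC.support_nodup
  have hlen : C.support.tail.length = C.length := by
    have h1 := Walk.length_support C
    have h2 : C.support.tail.length = C.support.length - 1 := List.length_tail
    omega
  have h3 := hC.three_le_length
  have hle := Set.ncard_le_ncard hsub (S.toFinite)
  rw [Set.ncard_coe_finset, hcard, hlen] at hle
  omega

theorem threeConnected_mixedBicycle_K23Based' [Fintype V] (G : SimpleGraph V)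
    (h3 : ThreeConnected G) (hmb : HasMixedBicycle G) :
    K23Based G := by
  classical
  obtain ⟨u, v, Qo, Qe, hQo, hQe, hQoodd, hQeeven, hQelen, hcycdisj⟩ := hmb
  set A : Set V := {w | w ∈ Qe.support} with hA
  set B : Set V := {w | w ∈ Qo.support} with hB
  -- every A-B separator has at least 3 vertices
  have hsep : ∀ S : Set V, MSep G A B S → 3 ≤ S.ncard := by
    intro S hS
    by_contra hlt
    push_neg at hlt
    have hS2 : S.ncard ≤ 2 := by omega
    have hconn := h3.2 S hS2
    obtain ⟨a, haC, haS⟩ := cycle_exists_avoid hQe S hS2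
    obtain ⟨b, hbC, hbS⟩ := cycle_exists_avoid hQo S hS2
    have hreach := hconn.preconnected ⟨a, haS⟩ ⟨b, hbS⟩
    obtain ⟨w'⟩ := hreach
    obtain ⟨z, hz, hzS⟩ := hS haC hbC (w'.map (SimpleGraph.Embedding.induce Sᶜ).toHom)
    erw [Walk.support_map] at hz
    obtain ⟨⟨z', hz'⟩, -, rfl⟩ := List.mem_map.mp hz
    exact hz' hzS
  -- three disjoint paths from the even cycle to the odd cycle
  obtain ⟨F⟩ := menger G A B 3 hsep
  obtain ⟨T, hT, -⟩ := fan_refine F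
  have hainj : Function.Injective T.a := fan_a_inj T
  have hbinj : Function.Injective T.b := fan_b_inj T
  -- find two attachment vertices on the even cycle with both arcs of even length
  obtain ⟨s, t, i0, j0, hij, hsu, htu, hst, p1, p2, hp1, hp2, h12, he1, he2, hc1, hc2⟩ :=
    even_pair hQe hQeeven T.a (fun i => T.ha i) hainj
  -- the two fan paths at s and t
  have hy : T.b i0 ≠ T.b j0 := fun h => hij (hbinj h)
  obtain ⟨r1, r2, hr1, hr2, hrr, hrsum, hr1C, hr2C, -⟩ :=
    cycle_split hQo (T.hb i0) (T.hb j0) hy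
  set Ps : G.Walk s (T.b i0) := (T.P i0).copy hsu.symm rfl with hPs
  set Pt : G.Walk t (T.b j0) := (T.P j0).copy htu.symm rfl with hPt
  have hPssup : ∀ w, w ∈ Ps.support ↔ w ∈ (T.P i0).support := by
    intro w; rw [hPs, Walk.support_copy]
  have hPtsup : ∀ w, w ∈ Pt.support ↔ w ∈ (T.P j0).support := by
    intro w; rw [hPt, Walk.support_copy]
  -- middle path on the odd cycle with the right parity
  have hm : ∃ m : G.Walk (T.b i0) (T.b j0), m.IsPath ∧
      (∀ w ∈ m.support, w ∈ Qo.support) ∧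
      Even (Ps.length + (m.length + Pt.length)) := by
    rcases hQoodd with ⟨k, hk⟩
    by_cases hpar : Even (Ps.length + (r1.length + Pt.length))
    · exact ⟨r1, hr1, hr1C, hpar⟩
    · refine ⟨r2.reverse, hr2.reverse, ?_, ?_⟩
      · intro w hw
        rw [Walk.support_reverse, List.mem_reverse] at hw
        exact hr2C w hw
      · rw [Walk.length_reverse]
        rcases Nat.even_or_odd (Ps.length + (r2.length + Pt.length)) with h | h
        · exact h
        · exfalso
          apply hpar
          rcases h with ⟨c, hc⟩
          refine ⟨(Ps.length + (r1.length + Pt.length)) / 2, ?_⟩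
          omega
  obtain ⟨m, hmpath, hmC, hmeven⟩ := hm
  -- the third theta path
  set third : G.Walk s t := Ps.append (m.append Pt.reverse) with hthird
  have hmB : ∀ w ∈ m.support, w ∈ B := fun w hw => hmC w hw
  have hPsA : ∀ w, w ∈ Ps.support → w ∈ A → w = s := by
    intro w hw hwA
    rw [hPssup] at hw
    rw [hsu]
    exact (hT i0 w hw).1 hwA
  have hPsB : ∀ w, w ∈ Ps.support → w ∈ B → w = T.b i0 := by
    intro w hw hwB
    rw [hPssup] at hw
    exact (hT i0 w hw).2 hwB
  have hPtA : ∀ w, w ∈ Pt.support → w ∈ A → w = t := by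
    intro w hw hwA
    rw [hPtsup] at hw
    rw [htu]
    exact (hT j0 w hw).1 hwA
  have hPtB : ∀ w, w ∈ Pt.support → w ∈ B → w = T.b j0 := by
    intro w hw hwB
    rw [hPtsup] at hw
    exact (hT j0 w hw).2 hwB
  have hPspath : Ps.IsPath := by
    rw [hPs, Walk.isPath_copy]; exact T.hpath i0
  have hPtpath : Pt.IsPath := by
    rw [hPt, Walk.isPath_copy]; exact T.hpath j0
  have hinner : (m.append Pt.reverse).IsPath := by
    apply isPath_append_of hmpath hPtpath.reverse
    intro z hz1 hz2
    rw [Walk.support_reverse, List.mem_reverse] at hz2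
    exact hPtB z hz2 (hmB z hz1)
  have hthirdpath : third.IsPath := by
    rw [hthird]
    apply isPath_append_of hPspath hinner
    intro z hz1 hz2
    rw [Walk.mem_support_append_iff] at hz2
    rcases hz2 with hz2 | hz2
    · exact hPsB z hz1 (hmB z hz2)
    · exfalso
      rw [Walk.support_reverse, List.mem_reverse] at hz2
      rw [hPssup] at hz1
      rw [hPtsup] at hz2
      exact T.hdisj i0 j0 hij z hz1 hz2
  have hthirdeven : Even third.length := by
    rw [hthird, Walk.length_append, Walk.length_append, Walk.length_reverse]
    exact hmeven
  have hthirdsup : ∀ w, w ∈ third.support →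
      w ∈ Ps.support ∨ w ∈ m.support ∨ w ∈ Pt.support := by
    intro w hw
    rw [hthird, Walk.mem_support_append_iff] at hw
    rcases hw with hw | hw
    · exact Or.inl hw
    · rw [Walk.mem_support_append_iff] at hw
      rcases hw with hw | hw
      · exact Or.inr (Or.inl hw)
      · rw [Walk.support_reverse, List.mem_reverse] at hw
        exact Or.inr (Or.inr hw)
  have hd13 : ∀ q : G.Walk s t, q.IsPath → (∀ w ∈ q.support, w ∈ Qe.support) →
      ∀ w, w ∈ q.support → w ∈ third.support → w = s ∨ w = t := by
    intro q hqp hqC w hw hw'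
    have hwA : w ∈ A := hqC w hw
    rcases hthirdsup w hw' with h | h | h
    · exact Or.inl (hPsA w h hwA)
    · exact absurd hwA (hcycdisj w (hmC w h))
    · exact Or.inr (hPtA w h hwA)
  set p : Fin 3 → G.Walk s t :=
    fun j => if j = 0 then p1 else if j = 1 then p2 else third with hp
  have e0 : p 0 = p1 := by simp [hp]
  have e1 : p 1 = p2 := by simp [hp]
  have e2 : p 2 = third := by simp [hp]
  have hpos3 : 0 < third.length := length_pos_of_ne hst
  apply k23Based_of_theta hst p
  · intro j
    rcases fin3_cases j with rfl | rfl | rfl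
    · rw [e0]; exact hp1
    · rw [e1]; exact hp2
    · rw [e2]; exact hthirdpath
  · intro j
    rcases fin3_cases j with rfl | rfl | rfl
    · rw [e0]; exact he1
    · rw [e1]; exact he2
    · rw [e2]; exact hthirdeven
  · intro j
    rcases fin3_cases j with rfl | rfl | rfl
    · rw [e0]; exact length_pos_of_ne hst
    · rw [e1]; exact length_pos_of_ne hst
    · rw [e2]; exact hpos3
  · intro j j' hne w hw hw'
    rcases fin3_cases j with rfl | rfl | rfl <;> rcases fin3_cases j' with rfl | rfl | rfl
    · exact absurd rfl hne
    · rw [e0] at hw; rw [e1] at hw'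
      exact h12 w hw hw'
    · rw [e0] at hw; rw [e2] at hw'
      exact hd13 p1 hp1 hc1 w hw hw'
    · rw [e1] at hw; rw [e0] at hw'
      exact h12 w hw' hw
    · exact absurd rfl hne
    · rw [e1] at hw; rw [e2] at hw'
      exact hd13 p2 hp2 hc2 w hw hw'
    · rw [e2] at hw; rw [e0] at hw'
      exact hd13 p1 hp1 hc1 w hw' hw
    · rw [e2] at hw; rw [e1] at hw'
      exact hd13 p2 hp2 hc2 w hw' hw
    · exact absurd rfl hne

end AuxiliaryMachinery

/-- If a 3-connected graph contains a mixed bicycle, then it is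
`K₂,₃`-based. -/
theorem threeConnected_mixedBicycle_K23Based [Fintype V] (G : SimpleGraph V)
    (h3 : ThreeConnected G) (hmb : HasMixedBicycle G) :
    K23Based G := by
  exact threeConnected_mixedBicycle_K23Based' G h3 hmb
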